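/- For every nonnegative integer n and every complex number z, 2^n · B_n(z + 1/4) = ∑_{k=0}^{n} 2^{2k-n} · C(n,k) · B_k(z) = ∑_{k=0}^{n} C(n,k) · E_{n-k}(1/2) · B_k(2z) = ∑_{k=0}^{n} C(n,k) · B_{n-k}(1/2) · E_k(2z), where C(n,k) denotes the binomial coefficient. -/

import Mathlib

open Finset

/-- The Bernoulli polynomial `B_n` evaluated at a complex number `z`,
with generating function `t·e^{zt}/(e^t−1) = ∑_{n≥0} B_n(z)·t^n/n!`. -/
noncomputable def bernoulliPoly (n : ℕ) (z : ℂ) : ℂ :=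
  Polynomial.aeval z (Polynomial.bernoulli n)

/-- The Euler polynomial `E_n` evaluated at a complex number `z`,
with generating function `2·e^{zt}/(e^t+1) = ∑_{n≥0} E_n(z)·t^n/n!`,
given by the explicit formula `E_n(z) = ∑_{k=0}^n 2^{-k} ∑_{j=0}^k (-1)^j C(k,j)(z+j)^n`. -/
noncomputable def eulerPoly (n : ℕ) (z : ℂ) : ℂ :=
  ∑ k ∈ range (n + 1), (1 / 2 ^ k : ℂ) *
    ∑ j ∈ range (k + 1), (-1) ^ j * (k.choose j : ℂ) * (z + j) ^ n

namespace Stmt2Aux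

open scoped Nat
open PowerSeries

/-! ### Finite differences -/

noncomputable def Sfd (k n : ℕ) (w : ℂ) : ℂ :=
  ∑ j ∈ range (k + 1), (-1) ^ j * (k.choose j : ℂ) * (w + j) ^ n

lemma Sfd_succ (k n : ℕ) (w : ℂ) : Sfd (k + 1) n w = Sfd k n w - Sfd k n (w + 1) := by
  have hA : ∀ m : ℕ, ∀ v : ℂ, Sfd m n v
      = (∑ j ∈ range m, (-1) ^ (j+1) * (m.choose (j+1) : ℂ) * (v + (j+1 : ℕ)) ^ n) + v ^ n := by
    intro m v
    rw [Sfd, Finset.sum_range_succ']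
    simp
  have hB : Sfd k n (w+1) = ∑ j ∈ range (k+1), (-1) ^ j * (k.choose j : ℂ) * (w + ((j+1 : ℕ) : ℂ)) ^ n := by
    rw [Sfd]
    refine Finset.sum_congr rfl fun j hj => ?_
    push_cast
    ring_nf
  rw [hA (k+1) w, hA k w, hB]
  have hsplit : ∀ j ∈ range (k+1),
      (-1 : ℂ) ^ (j+1) * ((k+1).choose (j+1) : ℂ) * (w + ((j+1 : ℕ) : ℂ)) ^ n
      = (-1) ^ (j+1) * (k.choose (j+1) : ℂ) * (w + ((j+1 : ℕ):ℂ)) ^ n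
        - (-1) ^ j * (k.choose j : ℂ) * (w + ((j+1 : ℕ):ℂ)) ^ n := by
    intro j hj
    rw [Nat.choose_succ_succ]
    push_cast
    ring
  rw [Finset.sum_congr rfl hsplit, Finset.sum_sub_distrib]
  have hlast : ∑ j ∈ range (k+1), (-1:ℂ) ^ (j+1) * (k.choose (j+1) : ℂ) * (w + ((j+1 : ℕ):ℂ)) ^ n
      = ∑ j ∈ range k, (-1:ℂ) ^ (j+1) * (k.choose (j+1) : ℂ) * (w + ((j+1 : ℕ):ℂ)) ^ n := by
    rw [Finset.sum_range_succ, Nat.choose_succ_self]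
    simp
  rw [hlast]
  push_cast
  ring

lemma Sfd_shift (k n : ℕ) (w : ℂ) :
    Sfd k n (w + 1) = ∑ m ∈ range (n + 1), (n.choose m : ℂ) * Sfd k m w := by
  simp only [Sfd, Finset.mul_sum]
  rw [Finset.sum_comm]
  refine Finset.sum_congr rfl fun j hj => ?_
  have hpow : (w + j + 1) ^ n = ∑ m ∈ range (n + 1), (w + j) ^ m * (n.choose m : ℂ) := by
    have := add_pow (w + (j:ℂ)) 1 n
    simpa using this
  rw [show w + (j:ℂ) + 1 = w + 1 + j by ring] at hpow
  rw [hpow, Finset.mul_sum]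
  refine Finset.sum_congr rfl fun m hm => ?_
  ring

lemma Sfd_eq_zero : ∀ n k : ℕ, ∀ w : ℂ, n < k → Sfd k n w = 0 := by
  intro n
  induction n using Nat.strong_induction_on with
  | _ n ih =>
    intro k w hk
    obtain ⟨k', rfl⟩ : ∃ k', k = k' + 1 := ⟨k - 1, by omega⟩
    rw [Sfd_succ, Sfd_shift, Finset.sum_range_succ]
    have hz : ∀ m ∈ range n, (n.choose m : ℂ) * Sfd k' m w = 0 := by
      intro m hm
      have hm' := Finset.mem_range.mp hm
      rw [ih m hm' k' w (by omega), mul_zero]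
    rw [Finset.sum_eq_zero hz]
    simp

/-! ### Euler polynomial recurrence -/

lemma eulerPoly_eq_sum (m N : ℕ) (w : ℂ) (h : m ≤ N) :
    eulerPoly m w = ∑ k ∈ range (N + 1), (1 / 2 ^ k : ℂ) * Sfd k m w := by
  rw [eulerPoly]
  refine Finset.sum_subset ?_ ?_
  · exact Finset.range_subset_range.mpr (by omega)
  · intro k hk hk2
    rw [show (∑ j ∈ range (k + 1), (-1:ℂ) ^ j * (k.choose j : ℂ) * (w + j) ^ m) = Sfd k m w from rfl,
      Sfd_eq_zero m k w (by simp only [Finset.mem_range] at hk hk2; omega), mul_zero]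

lemma euler_rec (n : ℕ) (w : ℂ) :
    eulerPoly n w + ∑ m ∈ range (n + 1), (n.choose m : ℂ) * eulerPoly m w = 2 * w ^ n := by
  have h1 : ∑ m ∈ range (n + 1), (n.choose m : ℂ) * eulerPoly m w
      = ∑ k ∈ range (n + 1), (1 / 2 ^ k : ℂ) * (Sfd k n w - Sfd (k+1) n w) := by
    have : ∀ m ∈ range (n + 1), (n.choose m : ℂ) * eulerPoly m w
        = ∑ k ∈ range (n + 1), (n.choose m : ℂ) * ((1 / 2 ^ k : ℂ) * Sfd k m w) := by
      intro m hm
      rw [eulerPoly_eq_sum m n w (by simpa using Nat.lt_succ_iff.mp (Finset.mem_range.mp hm)),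
        Finset.mul_sum]
    rw [Finset.sum_congr rfl this, Finset.sum_comm]
    refine Finset.sum_congr rfl fun k hk => ?_
    have : ∑ m ∈ range (n + 1), (n.choose m : ℂ) * ((1 / 2 ^ k : ℂ) * Sfd k m w)
        = (1 / 2 ^ k : ℂ) * ∑ m ∈ range (n + 1), (n.choose m : ℂ) * Sfd k m w := by
      rw [Finset.mul_sum]; exact Finset.sum_congr rfl fun m _ => by ring
    rw [this, ← Sfd_shift, Sfd_succ k n w]
    ring
  rw [h1, eulerPoly_eq_sum n n w le_rfl, ← Finset.sum_add_distrib]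
  have h2 : ∀ k ∈ range (n + 1),
      (1 / 2 ^ k : ℂ) * Sfd k n w + (1 / 2 ^ k : ℂ) * (Sfd k n w - Sfd (k+1) n w)
      = 2 * Sfd k n w / 2 ^ k - 2 * Sfd (k+1) n w / 2 ^ (k+1) := by
    intro k hk
    have h2k : (2:ℂ) ^ k ≠ 0 := pow_ne_zero _ two_ne_zero
    field_simp
    ring
  rw [Finset.sum_congr rfl h2, Finset.sum_range_sub' (fun k => 2 * Sfd k n w / 2 ^ k) (n+1)]
  rw [Sfd_eq_zero n (n+1) w (by omega)]
  have : Sfd 0 n w = w ^ n := by simp [Sfd]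
  rw [this]
  simp

/-! ### Generating functions -/

lemma fact_ne (k : ℕ) : (k ! : ℂ) ≠ 0 := Nat.cast_ne_zero.mpr (Nat.factorial_ne_zero k)

lemma choose_fact (n k : ℕ) (h : k ≤ n) :
    (n ! : ℂ) = (n.choose k : ℂ) * k ! * (n-k) ! := by
  exact_mod_cast (Nat.choose_mul_factorial_mul_factorial h).symm

lemma coeff_mk_mul_mk (a b : ℕ → ℂ) (n : ℕ) :
    PowerSeries.coeff n (PowerSeries.mk (fun k => a k / k !) * PowerSeries.mk (fun k => b k / k !))
      = (∑ k ∈ range (n + 1), (n.choose k : ℂ) * a k * b (n - k)) / n ! := by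
  rw [PowerSeries.coeff_mul, Finset.Nat.sum_antidiagonal_eq_sum_range_succ_mk, Finset.sum_div]
  refine Finset.sum_congr rfl fun k hk => ?_
  have hk' : k ≤ n := Nat.lt_succ_iff.mp (Finset.mem_range.mp hk)
  simp only [PowerSeries.coeff_mk]
  rw [choose_fact n k hk']
  have h1 := fact_ne k
  have h2 := fact_ne (n - k)
  have h3 : (n.choose k : ℂ) ≠ 0 := Nat.cast_ne_zero.mpr (Nat.choose_pos hk').ne'
  field_simp

noncomputable def mkB (w : ℂ) : PowerSeries ℂ := PowerSeries.mk fun n => bernoulliPoly n w / n !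

noncomputable def mkG (w : ℂ) : PowerSeries ℂ := PowerSeries.mk fun n => eulerPoly n w / n !

lemma euler_gf (w : ℂ) :
    mkG w * (PowerSeries.exp ℂ + 1) = 2 * PowerSeries.rescale w (PowerSeries.exp ℂ) := by
  ext n
  rw [mkG, PowerSeries.coeff_mul, Finset.Nat.sum_antidiagonal_eq_sum_range_succ_mk]
  have hco : ∀ j : ℕ, PowerSeries.coeff j (PowerSeries.exp ℂ + 1)
      = (j ! : ℂ)⁻¹ + (if j = 0 then 1 else 0) := by
    intro j
    rw [map_add, PowerSeries.coeff_exp, PowerSeries.coeff_one]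
    push_cast
    simp
  simp only [PowerSeries.coeff_mk, hco, mul_add]
  rw [Finset.sum_add_distrib]
  have h2 : ∑ k ∈ range (n + 1), eulerPoly k w / k ! * (if n - k = 0 then (1:ℂ) else 0)
      = eulerPoly n w / n ! := by
    rw [Finset.sum_congr rfl (fun k hk => ?_), Finset.sum_ite_eq' (range (n+1)) n
      (fun k => eulerPoly k w / k !)]
    · simp
    · have hk' : k ≤ n := Nat.lt_succ_iff.mp (Finset.mem_range.mp hk)
      split_ifs with hA hB hB
      · simp
      · omega
      · omega
      · simp
  rw [h2]
  have h1 : ∑ k ∈ range (n + 1), eulerPoly k w / k ! * ((n-k) ! : ℂ)⁻¹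
      = (∑ k ∈ range (n + 1), (n.choose k : ℂ) * eulerPoly k w) / n ! := by
    rw [Finset.sum_div]
    refine Finset.sum_congr rfl fun k hk => ?_
    have hk' : k ≤ n := Nat.lt_succ_iff.mp (Finset.mem_range.mp hk)
    rw [choose_fact n k hk']
    have h1 := fact_ne k
    have h2 := fact_ne (n - k)
    have h3 : (n.choose k : ℂ) ≠ 0 := Nat.cast_ne_zero.mpr (Nat.choose_pos hk').ne'
    field_simp
  rw [h1]
  have hrhs : PowerSeries.coeff n (2 * PowerSeries.rescale w (PowerSeries.exp ℂ))
      = 2 * w ^ n / n ! := by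
    rw [show (2 : PowerSeries ℂ) = PowerSeries.C 2 from (map_ofNat _ 2).symm, PowerSeries.coeff_C_mul,
      PowerSeries.coeff_rescale, PowerSeries.coeff_exp]
    push_cast
    ring
  rw [hrhs]
  rw [← add_div, add_comm, euler_rec n w]

lemma bern_gf (w : ℂ) :
    mkB w * (PowerSeries.exp ℂ - 1) = PowerSeries.X * PowerSeries.rescale w (PowerSeries.exp ℂ) := by
  have h := Polynomial.bernoulli_generating_function (A := ℂ) w
  rw [← h]
  congr 1
  ext n
  rw [mkB, PowerSeries.coeff_mk, PowerSeries.coeff_mk, map_smul]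
  rw [Rat.smul_def]
  push_cast
  rw [bernoulliPoly]
  ring

lemma rescale_X' (c : ℂ) : PowerSeries.rescale c PowerSeries.X = PowerSeries.C c * PowerSeries.X := by
  ext n
  simp only [PowerSeries.coeff_rescale, PowerSeries.coeff_C_mul, PowerSeries.coeff_X]
  split_ifs with h
  · subst h; simp
  · simp

lemma exp1_ne : PowerSeries.exp ℂ - 1 ≠ 0 := by
  intro h
  have := congrArg (PowerSeries.coeff 1) h
  simp [PowerSeries.coeff_exp, PowerSeries.coeff_one] at this

lemma exp2_ne : PowerSeries.exp ℂ + 1 ≠ 0 := by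
  intro h
  have := congrArg (PowerSeries.coeff 0) h
  simp [PowerSeries.coeff_exp, PowerSeries.coeff_one] at this

lemma exp_sq : (PowerSeries.exp ℂ - 1) * (PowerSeries.exp ℂ + 1)
    = PowerSeries.rescale (2:ℂ) (PowerSeries.exp ℂ) - 1 := by
  have h := PowerSeries.exp_mul_exp_eq_exp_add (1:ℂ) 1
  rw [PowerSeries.rescale_one] at h
  simp only [RingHom.id_apply] at h
  rw [show (1:ℂ)+1 = 2 by norm_num] at h
  rw [← h]
  ring

lemma rescale2B_mul (w : ℂ) :
    PowerSeries.rescale (2:ℂ) (mkB w) * ((PowerSeries.exp ℂ - 1) * (PowerSeries.exp ℂ + 1))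
      = PowerSeries.C 2 * PowerSeries.X * PowerSeries.rescale (w * 2) (PowerSeries.exp ℂ) := by
  rw [exp_sq, show PowerSeries.rescale (2:ℂ) (PowerSeries.exp ℂ) - 1
      = PowerSeries.rescale (2:ℂ) (PowerSeries.exp ℂ - 1) by rw [map_sub, map_one]]
  rw [← map_mul, bern_gf, map_mul, PowerSeries.rescale_rescale, rescale_X']

lemma BG_mul (u v : ℂ) :
    mkB u * mkG v * ((PowerSeries.exp ℂ - 1) * (PowerSeries.exp ℂ + 1))
      = PowerSeries.C 2 * PowerSeries.X * PowerSeries.rescale (u + v) (PowerSeries.exp ℂ) := by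
  calc mkB u * mkG v * ((PowerSeries.exp ℂ - 1) * (PowerSeries.exp ℂ + 1))
      = (mkB u * (PowerSeries.exp ℂ - 1)) * (mkG v * (PowerSeries.exp ℂ + 1)) := by ring
    _ = (PowerSeries.X * PowerSeries.rescale u (PowerSeries.exp ℂ))
        * (2 * PowerSeries.rescale v (PowerSeries.exp ℂ)) := by rw [bern_gf, euler_gf]
    _ = PowerSeries.C 2 * PowerSeries.X
        * (PowerSeries.rescale u (PowerSeries.exp ℂ) * PowerSeries.rescale v (PowerSeries.exp ℂ)) := by
        rw [show (2 : PowerSeries ℂ) = PowerSeries.C 2 from (map_ofNat _ 2).symm]; ring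
    _ = _ := by rw [PowerSeries.exp_mul_exp_eq_exp_add]

lemma mixed_mul (z : ℂ) :
    (PowerSeries.rescale (2:ℂ) (mkB z) * PowerSeries.rescale (1/2 : ℂ) (PowerSeries.exp ℂ))
        * ((PowerSeries.exp ℂ - 1) * (PowerSeries.exp ℂ + 1))
      = PowerSeries.C 2 * PowerSeries.X * PowerSeries.rescale (z * 2 + 1/2) (PowerSeries.exp ℂ) := by
  calc (PowerSeries.rescale (2:ℂ) (mkB z) * PowerSeries.rescale (1/2 : ℂ) (PowerSeries.exp ℂ))
        * ((PowerSeries.exp ℂ - 1) * (PowerSeries.exp ℂ + 1))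
      = (PowerSeries.rescale (2:ℂ) (mkB z) * ((PowerSeries.exp ℂ - 1) * (PowerSeries.exp ℂ + 1)))
        * PowerSeries.rescale (1/2 : ℂ) (PowerSeries.exp ℂ) := by ring
    _ = PowerSeries.C 2 * PowerSeries.X
        * (PowerSeries.rescale (z * 2) (PowerSeries.exp ℂ) * PowerSeries.rescale (1/2 : ℂ) (PowerSeries.exp ℂ)) := by
        rw [rescale2B_mul]; ring
    _ = _ := by rw [PowerSeries.exp_mul_exp_eq_exp_add]

lemma hne : (PowerSeries.exp ℂ - 1) * (PowerSeries.exp ℂ + 1) ≠ 0 := mul_ne_zero exp1_ne exp2_ne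

lemma s1 (z : ℂ) : PowerSeries.rescale (2:ℂ) (mkB (z + 1/4))
    = PowerSeries.rescale (2:ℂ) (mkB z) * PowerSeries.rescale (1/2 : ℂ) (PowerSeries.exp ℂ) := by
  apply mul_right_cancel₀ hne
  rw [rescale2B_mul, mixed_mul, show (z + 1/4) * 2 = z * 2 + 1/2 by ring]

lemma s2 (z : ℂ) : PowerSeries.rescale (2:ℂ) (mkB z) * PowerSeries.rescale (1/2 : ℂ) (PowerSeries.exp ℂ)
    = mkB (2 * z) * mkG (1/2) := by
  apply mul_right_cancel₀ hne
  rw [mixed_mul, BG_mul, show (2 * z + 1/2 : ℂ) = z * 2 + 1/2 by ring]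

lemma s3 (z : ℂ) : mkB (2 * z) * mkG (1/2) = mkG (2 * z) * mkB (1/2) := by
  apply mul_right_cancel₀ hne
  rw [BG_mul, show mkG (2*z) * mkB (1/2) = mkB (1/2) * mkG (2*z) by ring, BG_mul,
    show (2 * z + 1/2 : ℂ) = 1/2 + 2 * z by ring]

/-! ### Coefficient extraction -/

lemma rescale2B_eq (w : ℂ) : PowerSeries.rescale (2:ℂ) (mkB w)
    = PowerSeries.mk fun k => (2 ^ k * bernoulliPoly k w) / k ! := by
  ext n
  rw [PowerSeries.coeff_rescale, mkB, PowerSeries.coeff_mk, PowerSeries.coeff_mk]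
  ring

lemma rescaleHalfExp : PowerSeries.rescale (1/2 : ℂ) (PowerSeries.exp ℂ)
    = PowerSeries.mk fun k => ((1/2 : ℂ) ^ k) / k ! := by
  ext n
  rw [PowerSeries.coeff_rescale, PowerSeries.coeff_exp, PowerSeries.coeff_mk]
  push_cast
  ring

end Stmt2Aux

theorem stmt2 (n : ℕ) (z : ℂ) :
    ((2 : ℂ) ^ n * bernoulliPoly n (z + 1 / 4)
      = ∑ k ∈ range (n + 1), (2 : ℂ) ^ (2 * (k : ℤ) - n) * (n.choose k : ℂ) *
        bernoulliPoly k z) ∧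
    (∑ k ∈ range (n + 1), (2 : ℂ) ^ (2 * (k : ℤ) - n) * (n.choose k : ℂ) *
        bernoulliPoly k z
      = ∑ k ∈ range (n + 1), (n.choose k : ℂ) * eulerPoly (n - k) (1 / 2) *
        bernoulliPoly k (2 * z)) ∧
    (∑ k ∈ range (n + 1), (n.choose k : ℂ) * eulerPoly (n - k) (1 / 2) *
        bernoulliPoly k (2 * z)
      = ∑ k ∈ range (n + 1), (n.choose k : ℂ) * bernoulliPoly (n - k) (1 / 2) *
        eulerPoly k (2 * z)) := by
  classical
  -- term-level translation of the exotic power `2 ^ (2k - n)`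
  have hterm : ∀ k ∈ range (n + 1),
      (2 : ℂ) ^ (2 * (k : ℤ) - n) * (n.choose k : ℂ) * bernoulliPoly k z
      = (n.choose k : ℂ) * (2 ^ k * bernoulliPoly k z) * ((1/2 : ℂ) ^ (n - k)) := by
    intro k hk
    have hk' : k ≤ n := Nat.lt_succ_iff.mp (Finset.mem_range.mp hk)
    have hz : (2 : ℂ) ^ (2 * (k : ℤ) - n) = 2 ^ k * (1/2 : ℂ) ^ (n - k) := by
      rw [show 2 * (k : ℤ) - n = (k : ℤ) - ((n - k : ℕ) : ℤ) by push_cast [Nat.cast_sub hk']; ring]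
      rw [zpow_sub₀ (two_ne_zero), zpow_natCast, zpow_natCast, one_div, inv_pow, div_eq_mul_inv]
    rw [hz]
    ring
  have key1 : (2 : ℂ) ^ n * bernoulliPoly n (z + 1 / 4)
      = ∑ k ∈ range (n + 1), (n.choose k : ℂ) * (2 ^ k * bernoulliPoly k z) * ((1/2 : ℂ) ^ (n - k)) := by
    have h := congrArg (PowerSeries.coeff n) (Stmt2Aux.s1 z)
    rw [Stmt2Aux.rescale2B_eq, Stmt2Aux.rescale2B_eq, Stmt2Aux.rescaleHalfExp,
      PowerSeries.coeff_mk, Stmt2Aux.coeff_mk_mul_mk] at h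
    have h2 := congrArg (· * (n.factorial : ℂ)) h
    simpa [div_mul_cancel₀, Stmt2Aux.fact_ne n] using h2
  have key2 : ∑ k ∈ range (n + 1), (n.choose k : ℂ) * (2 ^ k * bernoulliPoly k z) * ((1/2 : ℂ) ^ (n - k))
      = ∑ k ∈ range (n + 1), (n.choose k : ℂ) * bernoulliPoly k (2 * z) * eulerPoly (n - k) (1/2) := by
    have h := congrArg (PowerSeries.coeff n) (Stmt2Aux.s2 z)
    rw [Stmt2Aux.rescale2B_eq, Stmt2Aux.rescaleHalfExp, Stmt2Aux.mkB, Stmt2Aux.mkG,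
      Stmt2Aux.coeff_mk_mul_mk, Stmt2Aux.coeff_mk_mul_mk] at h
    have h2 := congrArg (· * (n.factorial : ℂ)) h
    simpa [div_mul_cancel₀, Stmt2Aux.fact_ne n] using h2
  have key3 : ∑ k ∈ range (n + 1), (n.choose k : ℂ) * bernoulliPoly k (2 * z) * eulerPoly (n - k) (1/2)
      = ∑ k ∈ range (n + 1), (n.choose k : ℂ) * eulerPoly k (2 * z) * bernoulliPoly (n - k) (1/2) := by
    have h := congrArg (PowerSeries.coeff n) (Stmt2Aux.s3 z)
    rw [Stmt2Aux.mkB, Stmt2Aux.mkG, Stmt2Aux.mkB, Stmt2Aux.mkG,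
      Stmt2Aux.coeff_mk_mul_mk, Stmt2Aux.coeff_mk_mul_mk] at h
    have h2 := congrArg (· * (n.factorial : ℂ)) h
    simpa [div_mul_cancel₀, Stmt2Aux.fact_ne n] using h2
  refine ⟨?_, ?_, ?_⟩
  · rw [Finset.sum_congr rfl hterm]
    exact key1
  · rw [Finset.sum_congr rfl hterm, key2]
    exact Finset.sum_congr rfl fun k hk => by ring
  · calc ∑ k ∈ range (n + 1), (n.choose k : ℂ) * eulerPoly (n - k) (1 / 2) * bernoulliPoly k (2 * z)
        = ∑ k ∈ range (n + 1), (n.choose k : ℂ) * bernoulliPoly k (2 * z) * eulerPoly (n - k) (1/2) :=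
          Finset.sum_congr rfl fun k hk => by ring
      _ = ∑ k ∈ range (n + 1), (n.choose k : ℂ) * eulerPoly k (2 * z) * bernoulliPoly (n - k) (1/2) := key3
      _ = _ := Finset.sum_congr rfl fun k hk => by ring
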